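/- arXiv:1912.01764 — 2 statements merged into one kernel-verified Lean document; each statement's English description precedes it below -/
import Mathlib

section
/- In the Benders iteration, if at the end of an iteration every sub-problem is feasible (the infeasible set is empty), then the current master solution together with the sub-problem recourse solutions constitutes a feasible solution of the extensive formulation achieving the master objective value, and hence is optimal for the extensive problem when the master is a relaxation. -/
/-- Benders convergence: if the master optimum admits recourse for every
contingency, it is optimal for the extensive problem. -/
theorem benders_master_optimal_when_subproblems_feasible
    {α β C : Type*} (f : α → ℝ)
    (B : α → Prop) (G : C → α → β → Prop) (cuts : α → Prop)
    (hvalid : ∀ x, (B x ∧ ∀ c, ∃ y, G c x y) → cuts x)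
    (xs : α)
    (hxs : xs ∈ {x | B x ∧ cuts x})
    (hmaster : IsLeast (f '' {x | B x ∧ cuts x}) (f xs))
    (hfeas : ∀ c, ∃ y, G c xs y) :
    IsLeast (f '' {x | B x ∧ ∀ c, ∃ y, G c x y}) (f xs) := by
  constructor
  · exact ⟨xs, ⟨hxs.1, hfeas⟩, rfl⟩
  · rintro v ⟨x, ⟨hB, hG⟩, rfl⟩
    exact hmaster.2 ⟨x, ⟨hB, hvalid x ⟨hB, hG⟩⟩, rfl⟩
end

section
/- The minimum down-time constraints are valid: if u, v ∈ {0,1}^T satisfy v_{g,t} ≥ u_{g,t} - u_{g,t-1} and Σ_{q=t+1}^{t+DT} v_{g,q} ≤ 1 - u_{g,t} for all t ≤ T - DT, then whenever the unit shuts down at time s (u_{g,s-1} = 1, u_{g,s} = 0), it stays off for at least DT consecutive periods: u_{g,t} = 0 for all s ≤ t ≤ s + DT - 1 (within horizon). -/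
/-- Validity of the minimum down-time constraints: a unit that shuts down at
time `s` stays off for at least `DT` consecutive periods (within horizon). -/
theorem min_down_time_valid (T DT : ℕ) (hDT : 1 ≤ DT) (hDTT : DT ≤ T)
    (u v : ℕ → ℝ)
    (hu : ∀ t, u t = 0 ∨ u t = 1) (hv : ∀ t, v t = 0 ∨ v t = 1)
    (hlink : ∀ t, 1 ≤ t → t ≤ T → u t - u (t - 1) ≤ v t)
    (hon : ∀ t, 1 ≤ t → t ≤ T → v t ≤ u t)
    (hmindown : ∀ t, t + DT ≤ T →
      ∑ q ∈ Finset.Icc (t + 1) (t + DT), v q ≤ 1 - u t)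
    (s : ℕ) (hs1 : 1 ≤ s) (hsT : s + DT - 1 ≤ T)
    (hdown : u (s - 1) = 1) (hoff : u s = 0) :
    ∀ t, s ≤ t → t ≤ s + DT - 1 → u t = 0 := by
  have hle : (s - 1) + DT ≤ T := by omega
  have hsum := hmindown (s - 1) hle
  rw [hdown] at hsum
  have hnn : ∀ q ∈ Finset.Icc (s - 1 + 1) (s - 1 + DT), 0 ≤ v q := by
    intro q _; rcases hv q with h | h <;> simp [h]
  have hzero : ∀ q ∈ Finset.Icc (s - 1 + 1) (s - 1 + DT), v q = 0 := by
    have hsum0 : ∑ q ∈ Finset.Icc (s - 1 + 1) (s - 1 + DT), v q = 0 :=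
      le_antisymm (by linarith) (Finset.sum_nonneg hnn)
    exact (Finset.sum_eq_zero_iff_of_nonneg hnn).mp hsum0
  intro t hst
  induction t, hst using Nat.le_induction with
  | base => intro _; exact hoff
  | succ n hn ih =>
    intro hub
    have hu_n : u n = 0 := ih (by omega)
    have hv0 : v (n + 1) = 0 := by
      apply hzero
      simp only [Finset.mem_Icc]
      omega
    have hlk := hlink (n + 1) (by omega) (by omega)
    simp only [Nat.add_sub_cancel] at hlk
    rw [hu_n, hv0] at hlk
    rcases hu (n + 1) with h | h
    · exact h
    · rw [h] at hlk; linarith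
end
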